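/- arXiv:1812.11839 — 5 statements merged into one kernel-verified Lean document; each statement's English description precedes it below -/
import Mathlib

section
/- For every n ≥ 2, the angle-doubling map d maps the hemisphere D^{n−1} onto the unit sphere S^{n−1} ⊂ ℝ^n, maps the boundary ∂D^{n−1} = {x ∈ S^n : x_n = x_{n+1} = 0} to the single point (0, …, 0, −1) ∈ S^{n−1}, and its restriction to D^{n−1} is 4-Lipschitz. -/
/-- The angle-doubling map `d : ℝ^{n+1} → ℝ^n`,
`d(x_1, …, x_{n+1}) = (2x_n x_1, …, 2x_n x_{n−1}, 2x_n² − 1)`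
(here coordinates `x_1, …, x_{n+1}` correspond to indices `0, …, n`). -/
noncomputable def doubling (n : ℕ) (x : EuclideanSpace ℝ (Fin (n + 1))) :
    EuclideanSpace ℝ (Fin n) := WithLp.toLp 2 fun j =>
  if (j : ℕ) < n - 1 then 2 * x ⟨n - 1, by omega⟩ * x (Fin.castSucc j)
  else 2 * (x ⟨n - 1, by omega⟩) ^ 2 - 1

/-- The hemisphere `D^{n−1} = {x ∈ S^n : x_{n+1} = 0 and x_n ≥ 0}`. -/
def hemisphere (n : ℕ) : Set (EuclideanSpace ℝ (Fin (n + 1))) :=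
  {x | x ∈ Metric.sphere (0 : EuclideanSpace ℝ (Fin (n + 1))) 1 ∧
    x ⟨n, by omega⟩ = 0 ∧ 0 ≤ x ⟨n - 1, by omega⟩}

/-- The point `(0, …, 0, −1) ∈ S^{n−1} ⊂ ℝ^n`. -/
def southPole (n : ℕ) : EuclideanSpace ℝ (Fin n) := WithLp.toLp 2 fun j =>
  if (j : ℕ) = n - 1 then -1 else 0


lemma esq (k : ℕ) (z : EuclideanSpace ℝ (Fin k)) : ‖z‖ ^ 2 = ∑ i, (z i) ^ 2 := by
  rw [EuclideanSpace.norm_eq, Real.sq_sqrt (by positivity)]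
  simp [Real.norm_eq_abs, sq_abs]

lemma coord_le (k : ℕ) (z : EuclideanSpace ℝ (Fin k)) (i : Fin k) : |z i| ≤ ‖z‖ := by
  have h1 : (z i) ^ 2 ≤ ‖z‖ ^ 2 := by
    rw [esq]
    exact Finset.single_le_sum (f := fun i => (z i) ^ 2) (fun _ _ => sq_nonneg _)
      (Finset.mem_univ i)
  calc |z i| = Real.sqrt ((z i) ^ 2) := (Real.sqrt_sq_eq_abs _).symm
    _ ≤ Real.sqrt (‖z‖ ^ 2) := Real.sqrt_le_sqrt h1
    _ = ‖z‖ := Real.sqrt_sq (norm_nonneg _)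

lemma restr_norm (k : ℕ) (z : EuclideanSpace ℝ (Fin (k + 1)))
    (w : EuclideanSpace ℝ (Fin k)) (hw : ∀ j, w j = z (Fin.castSucc j)) : ‖w‖ ≤ ‖z‖ := by
  have h1 : ‖w‖ ^ 2 ≤ ‖z‖ ^ 2 := by
    rw [esq k w, esq (k+1) z, Fin.sum_univ_castSucc]
    simp only [hw]
    exact le_add_of_nonneg_right (sq_nonneg _)
  calc ‖w‖ = Real.sqrt (‖w‖ ^ 2) := (Real.sqrt_sq (norm_nonneg _)).symm
    _ ≤ Real.sqrt (‖z‖ ^ 2) := Real.sqrt_le_sqrt h1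
    _ = ‖z‖ := Real.sqrt_sq (norm_nonneg _)

lemma doubling_boundary (n : ℕ) (hn : 2 ≤ n) (x : EuclideanSpace ℝ (Fin (n+1)))
    (h1 : x ⟨n-1, by clear hn; omega⟩ = 0) : doubling n x = southPole n := by
  ext j
  simp only [doubling, southPole, PiLp.toLp_apply, h1]
  by_cases h : (j:ℕ) < n - 1
  · simp [h, show (j:ℕ) ≠ n-1 by omega]
  · have hj : (j:ℕ) = n-1 := by have := j.isLt; omega
    simp [h, hj]

lemma doubling_lip (m : ℕ) : LipschitzOnWith 4 (doubling (m+2)) (hemisphere (m+2)) := by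
  rw [lipschitzOnWith_iff_dist_le_mul]
  rintro x ⟨hx1, hx2, hx3⟩ y ⟨hy1, hy2, hy3⟩
  rw [mem_sphere_zero_iff_norm] at hx1 hy1
  set t := x ⟨m+1, by omega⟩ with ht
  set s := y ⟨m+1, by omega⟩ with hs
  set a : EuclideanSpace ℝ (Fin (m+2)) := WithLp.toLp 2 fun j => (x - y) (Fin.castSucc j) with ha
  set b : EuclideanSpace ℝ (Fin (m+2)) := WithLp.toLp 2 fun j => (x + y) (Fin.castSucc j) with hb
  have key : doubling (m+2) x - doubling (m+2) y = (t + s) • a + (t - s) • b := by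
    ext j
    have hxy : ∀ i, (x - y) i = x i - y i := fun i => rfl
    have hxy' : ∀ i : Fin (m+3), (x + y) i = x i + y i := fun i => rfl
    have hteq : x ⟨m+2-1, by omega⟩ = t := rfl
    have hseq : y ⟨m+2-1, by omega⟩ = s := rfl
    by_cases h : (j:ℕ) < m+1
    · simp only [PiLp.sub_apply, PiLp.add_apply, PiLp.smul_apply, doubling, PiLp.toLp_apply, ha, hb,
        hxy, hxy', if_pos (show (j:ℕ) < m+2-1 by omega), smul_eq_mul, hteq, hseq]
      ring
    · have hj : (j:ℕ) = m+1 := by have := j.isLt; omega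
      have hc : Fin.castSucc j = (⟨m+1, by omega⟩ : Fin (m+3)) := by
        apply Fin.ext; simpa using hj
      have hxc : x (Fin.castSucc j) = t := by rw [hc]
      have hyc : y (Fin.castSucc j) = s := by rw [hc]
      simp only [PiLp.sub_apply, PiLp.add_apply, PiLp.smul_apply, doubling, PiLp.toLp_apply, ha, hb,
        hxy, hxy', if_neg (show ¬ (j:ℕ) < m+2-1 by omega), smul_eq_mul, hteq, hseq,
        hxc, hyc]
      ring
  have hat : ‖a‖ ≤ ‖x - y‖ := restr_norm _ (x - y) a (fun j => rfl)
  have hbt : ‖b‖ ≤ ‖x + y‖ := restr_norm _ (x + y) b (fun j => rfl)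
  have hts : |t - s| ≤ ‖x - y‖ := by
    have := coord_le _ (x - y) ⟨m+1, by omega⟩
    simpa using this
  have htl : |t| ≤ 1 := hx1 ▸ coord_le _ x ⟨m+1, by omega⟩
  have hsl : |s| ≤ 1 := hy1 ▸ coord_le _ y ⟨m+1, by omega⟩
  have hxyn : ‖x + y‖ ≤ 2 := by
    calc ‖x + y‖ ≤ ‖x‖ + ‖y‖ := norm_add_le _ _
      _ = 2 := by rw [hx1, hy1]; norm_num
  have hnn : (0:ℝ) ≤ ‖x - y‖ := norm_nonneg _
  have han : (0:ℝ) ≤ ‖a‖ := norm_nonneg _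
  have hbn : (0:ℝ) ≤ ‖b‖ := norm_nonneg _
  rw [dist_eq_norm, dist_eq_norm, key]
  have step : ‖(t + s) • a + (t - s) • b‖ ≤ |t + s| * ‖a‖ + |t - s| * ‖b‖ := by
    calc ‖(t + s) • a + (t - s) • b‖ ≤ ‖(t + s) • a‖ + ‖(t - s) • b‖ := norm_add_le _ _
      _ = |t + s| * ‖a‖ + |t - s| * ‖b‖ := by
        rw [norm_smul, norm_smul, Real.norm_eq_abs, Real.norm_eq_abs]
  have h2 : |t + s| ≤ 2 := by
    calc |t + s| ≤ |t| + |s| := abs_add_le _ _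
      _ ≤ 2 := by linarith
  have habs : (0:ℝ) ≤ |t - s| := abs_nonneg _
  calc ‖(t + s) • a + (t - s) • b‖ ≤ |t + s| * ‖a‖ + |t - s| * ‖b‖ := step
    _ ≤ 2 * ‖x - y‖ + ‖x - y‖ * 2 := by
      have b1 : |t + s| * ‖a‖ ≤ 2 * ‖x - y‖ := by nlinarith [abs_nonneg (t+s)]
      have b2 : |t - s| * ‖b‖ ≤ ‖x - y‖ * 2 := by nlinarith
      linarith
    _ ≤ ((4:NNReal):ℝ) * ‖x - y‖ := by push_cast; linarith

lemma sphere_sum (k : ℕ) (z : EuclideanSpace ℝ (Fin k)) :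
    z ∈ Metric.sphere (0 : EuclideanSpace ℝ (Fin k)) 1 ↔ ∑ i, (z i) ^ 2 = 1 := by
  rw [mem_sphere_zero_iff_norm, ← esq]
  constructor
  · intro h; rw [h]; norm_num
  · intro h; nlinarith [norm_nonneg z]

lemma doubling_mem (m : ℕ) (x : EuclideanSpace ℝ (Fin (m+3))) (hx : x ∈ hemisphere (m+2)) :
    doubling (m+2) x ∈ Metric.sphere (0 : EuclideanSpace ℝ (Fin (m+2))) 1 := by
  obtain ⟨hx1, hx2, hx3⟩ := hx
  rw [sphere_sum] at hx1 ⊢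
  set t := x ⟨m+1, by omega⟩ with ht
  have hsum : ∑ i : Fin (m+1), (x (Fin.castSucc (Fin.castSucc i))) ^ 2 = 1 - t ^ 2 := by
    rw [Fin.sum_univ_castSucc, Fin.sum_univ_castSucc] at hx1
    have h1 : x (Fin.last (m+2)) = 0 := hx2
    have h2 : x (Fin.castSucc (Fin.last (m+1))) = t := rfl
    rw [h1, h2] at hx1
    nlinarith [hx1]
  have hlast : doubling (m+2) x (Fin.last (m+1)) = 2 * t ^ 2 - 1 := by
    simp only [doubling, PiLp.toLp_apply, if_neg (show ¬((Fin.last (m+1) : ℕ) < m+2-1) by simp)]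
    rfl
  have hci : ∀ i : Fin (m+1), doubling (m+2) x (Fin.castSucc i)
      = 2 * t * x (Fin.castSucc (Fin.castSucc i)) := by
    intro i
    simp only [doubling, PiLp.toLp_apply, if_pos (show ((Fin.castSucc i : ℕ)) < m+2-1 by
      simpa using i.isLt)]
    rfl
  rw [Fin.sum_univ_castSucc, hlast]
  simp only [hci]
  have : ∑ i : Fin (m+1), (2 * t * x (Fin.castSucc (Fin.castSucc i))) ^ 2
      = 4 * t ^ 2 * (1 - t ^ 2) := by
    simp_rw [mul_pow]
    rw [← Finset.mul_sum, hsum]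
    ring
  rw [this]
  ring

lemma doubling_surj (m : ℕ) (y : EuclideanSpace ℝ (Fin (m+2)))
    (hy : y ∈ Metric.sphere (0 : EuclideanSpace ℝ (Fin (m+2))) 1) :
    ∃ x ∈ hemisphere (m+2), doubling (m+2) x = y := by
  have hyn : ‖y‖ = 1 := mem_sphere_zero_iff_norm.mp hy
  rw [sphere_sum] at hy
  have hsplit : ∑ i : Fin (m+1), (y (Fin.castSucc i)) ^ 2 + (y (Fin.last (m+1))) ^ 2 = 1 := by
    have h := hy
    rw [Fin.sum_univ_castSucc] at h; exact h
  set s := y (Fin.last (m+1)) with hs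
  have hs1 : |s| ≤ 1 := hyn ▸ coord_le _ y (Fin.last (m+1))
  have hsge : -1 ≤ s := (abs_le.mp hs1).1
  have hsle : s ≤ 1 := (abs_le.mp hs1).2
  by_cases hsm : s = -1
  · -- y is the south pole
    have h0 : ∑ i : Fin (m+1), (y (Fin.castSucc i)) ^ 2 = 0 := by
      rw [hsm] at hsplit; nlinarith
    have hz : ∀ i : Fin (m+1), y (Fin.castSucc i) = 0 := by
      intro i
      have := (Finset.sum_eq_zero_iff_of_nonneg
        (fun i _ => sq_nonneg (y (Fin.castSucc i)))).mp h0 i (Finset.mem_univ i)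
      exact pow_eq_zero_iff (n := 2) (by norm_num) |>.mp this
    refine ⟨EuclideanSpace.single ⟨0, by omega⟩ 1, ⟨?_, ?_, ?_⟩, ?_⟩
    · rw [mem_sphere_zero_iff_norm, EuclideanSpace.norm_single]; norm_num
    · rw [EuclideanSpace.single_apply, if_neg (by simp [Fin.ext_iff])]
    · rw [EuclideanSpace.single_apply, if_neg (by simp [Fin.ext_iff])]
    · rw [doubling_boundary (m+2) (by omega)]
      · ext j
        by_cases hj : (j : ℕ) = m+1
        · have hjl : j = Fin.last (m+1) := Fin.ext (by simpa using hj)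
          rw [hjl, ← hs, hsm]
          simp only [southPole, PiLp.toLp_apply]
          rw [if_pos (by simp)]
        · have hjlt : (j : ℕ) < m+1 := by have := j.isLt; omega
          have hjj : j = Fin.castSucc ⟨(j:ℕ), hjlt⟩ := Fin.ext rfl
          rw [hjj, hz]
          simp only [southPole, PiLp.toLp_apply]
          rw [if_neg (by simpa using hj)]
      · rw [EuclideanSpace.single_apply, if_neg (by simp [Fin.ext_iff])]
  · -- the generic case
    have hspos : 0 < 1 + s := by
      rcases lt_or_eq_of_le hsge with h | h
      · linarith
      · exact absurd h.symm hsm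
    set t := Real.sqrt ((1+s)/2) with htdef
    have ht2 : t ^ 2 = (1+s)/2 := Real.sq_sqrt (by linarith)
    have ht0 : 0 < t := Real.sqrt_pos.mpr (by linarith)
    have htne : t ≠ 0 := ne_of_gt ht0
    set x : EuclideanSpace ℝ (Fin (m+3)) := WithLp.toLp 2 fun i =>
      if h : (i : ℕ) < m+1 then y ⟨(i : ℕ), by omega⟩ / (2*t)
      else if (i : ℕ) = m+1 then t else 0 with hx
    have key : ∀ i : Fin (m+3), x i =
        if h : (i : ℕ) < m+1 then y ⟨(i : ℕ), by omega⟩ / (2*t)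
        else if (i : ℕ) = m+1 then t else 0 := fun i => rfl
    have hxm1 : x ⟨m+1, by omega⟩ = t := by
      rw [key, dif_neg (by simp), if_pos (by simp)]
    have hxm2 : x ⟨m+2, by omega⟩ = 0 := by
      rw [key, dif_neg (by simp), if_neg (by simp)]
    have hxc : ∀ i : Fin (m+1), x (Fin.castSucc (Fin.castSucc i)) = y (Fin.castSucc i) / (2*t) := by
      intro i
      rw [key, dif_pos (by simpa using i.isLt)]
      congr 1
    refine ⟨x, ⟨?_, hxm2, by
      rw [show x ⟨m+2-1, by omega⟩ = t from hxm1]; exact le_of_lt ht0⟩, ?_⟩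
    · rw [sphere_sum, Fin.sum_univ_castSucc, Fin.sum_univ_castSucc]
      have e1 : x (Fin.last (m+2)) = 0 := hxm2
      have e2 : x (Fin.castSucc (Fin.last (m+1))) = t := hxm1
      rw [e1, e2]
      have e3 : ∑ i : Fin (m+1), (x (Fin.castSucc (Fin.castSucc i))) ^ 2
          = (1 - s^2) / (4 * t^2) := by
        have h5 : ∀ i : Fin (m+1), (x (Fin.castSucc (Fin.castSucc i))) ^ 2
            = (y (Fin.castSucc i))^2 / (4 * t^2) := by
          intro i
          rw [hxc i, div_pow, show ((2:ℝ)*t)^2 = 4*t^2 by ring]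
        simp_rw [h5]
        rw [← Finset.sum_div]
        congr 1
        linarith [hsplit]
      rw [e3, ht2]
      have h1s : (1:ℝ) + s ≠ 0 := ne_of_gt hspos
      field_simp
      ring
    · ext j
      by_cases hj : (j : ℕ) < m+1
      · have hcast : Fin.castSucc j = Fin.castSucc (Fin.castSucc (⟨(j:ℕ), hj⟩ : Fin (m+1))) :=
          Fin.ext rfl
        simp only [doubling, PiLp.toLp_apply, if_pos (show (j:ℕ) < m+2-1 by omega)]
        rw [show x ⟨m+2-1, by omega⟩ = t from hxm1, hcast, hxc]
        have hyj : y (Fin.castSucc (⟨(j:ℕ), hj⟩ : Fin (m+1))) = y j := by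
          rfl
        rw [hyj]
        field_simp
      · simp only [doubling, PiLp.toLp_apply, if_neg (show ¬(j:ℕ) < m+2-1 by omega)]
        rw [show x ⟨m+2-1, by omega⟩ = t from hxm1, ht2]
        have hjl : j = Fin.last (m+1) := Fin.ext (by have := j.isLt; simp; omega)
        rw [hjl, ← hs]
        ring

theorem doubling_maps_hemisphere_onto_sphere (n : ℕ) (hn : 2 ≤ n) :
    doubling n '' hemisphere n = Metric.sphere (0 : EuclideanSpace ℝ (Fin n)) 1 ∧
    (∀ x ∈ Metric.sphere (0 : EuclideanSpace ℝ (Fin (n + 1))) 1,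
      x ⟨n - 1, by omega⟩ = 0 → x ⟨n, by omega⟩ = 0 → doubling n x = southPole n) ∧
    LipschitzOnWith 4 (doubling n) (hemisphere n) := by
  obtain ⟨m, rfl⟩ : ∃ m, n = m + 2 := ⟨n - 2, by omega⟩
  refine ⟨?_, ?_, doubling_lip m⟩
  · apply Set.Subset.antisymm
    · rintro _ ⟨x, hx, rfl⟩
      exact doubling_mem m x hx
    · intro y hy
      obtain ⟨x, hx, hxy⟩ := doubling_surj m y hy
      exact ⟨x, hx, hxy⟩
  · intro x _ h1 _
    exact doubling_boundary (m+2) (by omega) x h1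
end

section
/- For every n ≥ 1 there exists a surjective map from the unit sphere S^n ⊂ ℝ^{n+1} onto the unit circle S^1 ⊂ ℝ² that is 4^{n−1}-Lipschitz (4^{n−1}-contracting). -/
open Complex Real



lemma exp_I_sub_one_norm (θ : ℝ) : ‖Complex.exp (θ * I) - 1‖ ≤ |θ| := by
  have h : ‖Complex.exp (θ * I) - 1‖ = 2 * |Real.sin (θ / 2)| := by
    rw [Complex.exp_mul_I]
    have : Complex.cos θ + Complex.sin θ * I - 1 = ⟨Real.cos θ - 1, Real.sin θ⟩ := by
      apply Complex.ext <;>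
        simp [Complex.cos_ofReal_re, Complex.sin_ofReal_re, Complex.cos_ofReal_im,
          Complex.sin_ofReal_im]
    rw [this]
    rw [Complex.norm_def, Complex.normSq_mk]
    rw [Real.abs_sin_half]
    rw [show (Real.cos θ - 1) * (Real.cos θ - 1) + Real.sin θ * Real.sin θ
        = 2 ^ 2 * ((1 - Real.cos θ) / 2) by nlinarith [Real.sin_sq_add_cos_sq θ]]
    rw [Real.sqrt_mul (by positivity), Real.sqrt_sq (by norm_num)]
  rw [h]
  have := Real.abs_sin_le_abs (x := θ / 2)
  rw [abs_div, _root_.abs_two] at this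
  linarith

lemma exp_I_lipschitz (s t : ℝ) :
    ‖Complex.exp (s * I) - Complex.exp (t * I)‖ ≤ |s - t| := by
  have h : Complex.exp (s * I) - Complex.exp (t * I)
      = Complex.exp (t * I) * (Complex.exp ((s - t : ℝ) * I) - 1) := by
    rw [mul_sub, mul_one, ← Complex.exp_add]
    push_cast
    ring_nf
  rw [h, norm_mul, Complex.norm_exp_ofReal_mul_I, one_mul]
  exact exp_I_sub_one_norm _


lemma sphere_point (n : ℕ) (t : ℝ) (ht : |t| ≤ 1) :
    ∃ x : EuclideanSpace ℝ (Fin (n + 2)), ‖x‖ = 1 ∧ x 0 = t := by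
  set s := Real.sqrt (1 - t ^ 2) with hs_def
  have h1 : t ^ 2 ≤ 1 := by nlinarith [abs_nonneg t, _root_.sq_abs t]
  have hs : s ^ 2 = 1 - t ^ 2 := Real.sq_sqrt (by linarith)
  refine ⟨(WithLp.toLp 2 (fun i : Fin (n + 2) => if i = 0 then t else if i = 1 then s else 0) : EuclideanSpace ℝ (Fin (n + 2))),
    ?_, by simp⟩
  rw [EuclideanSpace.norm_eq]
  have key : ∀ i : Fin (n + 2),
      ‖(if i = 0 then t else if i = 1 then s else 0 : ℝ)‖ ^ 2
        = (if i = 0 then t ^ 2 else 0) + (if i = 1 then s ^ 2 else 0) := by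
    intro i
    by_cases h0 : i = 0
    · have : (0 : Fin (n + 2)) ≠ 1 := by simp
      subst h0
      simp [this, Real.norm_eq_abs, _root_.sq_abs]
    · by_cases h1 : i = 1
      · subst h1
        simp [h0, Real.norm_eq_abs, _root_.sq_abs]
      · simp [h0, h1]
  rw [Finset.sum_congr rfl fun i _ => key i, Finset.sum_add_distrib]
  simp [Finset.sum_ite_eq', hs]

theorem exists_contracting_surjection_sphere_to_circle (n : ℕ) (hn : 1 ≤ n) :
    ∃ f : Metric.sphere (0 : EuclideanSpace ℝ (Fin (n + 1))) 1 →
        Metric.sphere (0 : EuclideanSpace ℝ (Fin 2)) 1,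
      Function.Surjective f ∧ LipschitzWith (4 ^ (n - 1)) f := by
  obtain ⟨m, rfl⟩ : ∃ m, n = m + 1 := ⟨n - 1, (Nat.succ_pred_eq_of_pos hn).symm⟩
  rcases Nat.eq_zero_or_pos m with rfl | hm
  · -- n = 1 : the identity map works
    refine ⟨id, Function.surjective_id, ?_⟩
    simpa using (LipschitzWith.id :
      LipschitzWith 1 (id : Metric.sphere (0 : EuclideanSpace ℝ (Fin 2)) 1 → _))
  · obtain ⟨k, rfl⟩ : ∃ k, m = k + 1 := ⟨m - 1, (Nat.succ_pred_eq_of_pos hm).symm⟩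
    set e := Complex.orthonormalBasisOneI.repr with he
    have hmem : ∀ x : Metric.sphere (0 : EuclideanSpace ℝ (Fin (k + 1 + 1 + 1))) 1,
        e (Complex.exp ((π * x.val 0 : ℝ) * I)) ∈
          Metric.sphere (0 : EuclideanSpace ℝ (Fin 2)) 1 := by
      intro x
      rw [mem_sphere_zero_iff_norm, e.norm_map,
        Complex.norm_exp_ofReal_mul_I]
    refine ⟨fun x => ⟨e (Complex.exp ((π * x.val 0 : ℝ) * I)), hmem x⟩, ?_, ?_⟩
    · -- surjectivity
      intro z
      set w := e.symm z.val with hw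
      have hwnorm : ‖w‖ = 1 := by
        rw [hw, e.symm.norm_map]
        exact mem_sphere_zero_iff_norm.mp z.2
      have hexp : Complex.exp ((w.arg : ℝ) * I) = w := by
        have := Complex.norm_mul_exp_arg_mul_I w
        rwa [hwnorm, Complex.ofReal_one, one_mul] at this
      have hπ : (0 : ℝ) < π := Real.pi_pos
      set t : ℝ := w.arg / π with ht_def
      have ht : |t| ≤ 1 := by
        rw [ht_def, abs_div, abs_of_pos hπ, div_le_one hπ]
        exact Complex.abs_arg_le_pi w
      obtain ⟨x, hx1, hx0⟩ := sphere_point (k + 1) t ht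
      refine ⟨⟨x, mem_sphere_zero_iff_norm.mpr hx1⟩, ?_⟩
      apply Subtype.ext
      show e (Complex.exp ((π * x 0 : ℝ) * I)) = z.val
      rw [hx0, ht_def, mul_div_cancel₀ _ (ne_of_gt hπ), hexp, hw]
      exact e.apply_symm_apply z.val
    · -- Lipschitz
      apply LipschitzWith.of_dist_le_mul
      intro x y
      have hcoord : |x.val 0 - y.val 0| ≤ dist x y := by
        rw [Subtype.dist_eq, EuclideanSpace.dist_eq, ← Real.sqrt_sq_eq_abs]
        apply Real.sqrt_le_sqrt
        have := Finset.single_le_sum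
          (f := fun i => dist (x.val i) (y.val i) ^ 2)
          (fun i _ => sq_nonneg _) (Finset.mem_univ 0)
        simpa [Real.dist_eq] using this
      have h1 : dist
          (⟨e (Complex.exp ((π * x.val 0 : ℝ) * I)), hmem x⟩ :
            Metric.sphere (0 : EuclideanSpace ℝ (Fin 2)) 1)
          ⟨e (Complex.exp ((π * y.val 0 : ℝ) * I)), hmem y⟩
          ≤ π * dist x y := by
        rw [Subtype.dist_eq]
        show dist (e _) (e _) ≤ _
        rw [e.dist_map, dist_eq_norm]
        calc ‖Complex.exp ((π * x.val 0 : ℝ) * I) - Complex.exp ((π * y.val 0 : ℝ) * I)‖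
            ≤ |π * x.val 0 - π * y.val 0| := exp_I_lipschitz _ _
          _ = π * |x.val 0 - y.val 0| := by
              rw [← mul_sub, abs_mul, abs_of_pos Real.pi_pos]
          _ ≤ π * dist x y := by
              exact mul_le_mul_of_nonneg_left hcoord (le_of_lt Real.pi_pos)
      refine h1.trans ?_
      apply mul_le_mul_of_nonneg_right _ dist_nonneg
      have h4 : (π : ℝ) ≤ 4 := Real.pi_le_four
      have : ((4 ^ (k + 1 + 1 - 1) : NNReal) : ℝ) = 4 ^ (k + 1) := by
        push_cast
        norm_num
      rw [this]
      calc (π : ℝ) ≤ 4 ^ 1 := by simpa using h4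
        _ ≤ 4 ^ (k + 1) := by
            apply pow_le_pow_right₀ (by norm_num) (by omega)
end

section
/- Let L > 0 and c > 0, and let f : ℝ → ℝ be twice continuously differentiable with f(x) > 0 and f''(x) ≤ −c·f(x) for every x in the closed interval [0, L]. Then c·L² ≤ π². -/
theorem log_concavity_length_bound (L c : ℝ) (hL : 0 < L) (hc : 0 < c)
    (f : ℝ → ℝ) (hf : ContDiff ℝ 2 f)
    (hpos : ∀ x ∈ Set.Icc (0 : ℝ) L, 0 < f x)
    (hineq : ∀ x ∈ Set.Icc (0 : ℝ) L, deriv (deriv f) x ≤ -c * f x) :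
    c * L ^ 2 ≤ Real.pi ^ 2 := by
  by_contra hcon
  push_neg at hcon
  set s := Real.sqrt c with hs
  have hs0 : 0 < s := Real.sqrt_pos.mpr hc
  have hs2 : s ^ 2 = c := Real.sq_sqrt hc.le
  have hsL : Real.pi < s * L := by
    nlinarith [Real.pi_pos, mul_pos hs0 hL]
  set b := Real.pi / s with hb
  have hb0 : 0 < b := div_pos Real.pi_pos hs0
  have hbL : b < L := (div_lt_iff₀' hs0).mpr hsL
  have hfd : Differentiable ℝ f := hf.differentiable two_ne_zero
  have hf' : ContDiff ℝ 1 (deriv f) :=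
    (contDiff_succ_iff_deriv.mp (show ContDiff ℝ (1 + 1) f from by exact_mod_cast hf)).2.2
  have hfd' : Differentiable ℝ (deriv f) := hf'.differentiable one_ne_zero
  set W := fun x => f x * (s * Real.cos (s * x)) - deriv f x * Real.sin (s * x) with hW
  have hWd : ∀ x : ℝ,
      HasDerivAt W (Real.sin (s * x) * (-(c * f x) - deriv (deriv f) x)) x := by
    intro x
    have h1 : HasDerivAt (fun y => s * y) s x := by
      simpa using (hasDerivAt_id x).const_mul s
    have hsin : HasDerivAt (fun y => Real.sin (s * y)) (Real.cos (s * x) * s) x :=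
      (Real.hasDerivAt_sin (s * x)).comp x h1
    have hcos : HasDerivAt (fun y => Real.cos (s * y)) (-Real.sin (s * x) * s) x :=
      (Real.hasDerivAt_cos (s * x)).comp x h1
    have h2 : HasDerivAt (fun y => s * Real.cos (s * y)) (s * (-Real.sin (s * x) * s)) x :=
      hcos.const_mul s
    have h3 := ((hfd x).hasDerivAt.mul h2).sub ((hfd' x).hasDerivAt.mul hsin)
    refine h3.congr_deriv ?_
    linear_combination (-(f x * Real.sin (s * x))) * hs2
  have hWdiff : Differentiable ℝ W := fun x => (hWd x).differentiableAt
  have hmono : MonotoneOn W (Set.Icc 0 b) := by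
    apply monotoneOn_of_deriv_nonneg (convex_Icc 0 b) hWdiff.continuous.continuousOn
      (fun x _ => (hWdiff x).differentiableWithinAt)
    intro x hx
    rw [interior_Icc] at hx
    rw [(hWd x).deriv]
    have hxL : x ∈ Set.Icc (0 : ℝ) L := ⟨hx.1.le, hx.2.le.trans hbL.le⟩
    have hsx : s * x ≤ Real.pi := by
      have := hx.2.le
      rw [hb, le_div_iff₀ hs0] at this
      linarith [this]
    have hsinn : 0 ≤ Real.sin (s * x) :=
      Real.sin_nonneg_of_nonneg_of_le_pi (mul_nonneg hs0.le hx.1.le) hsx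
    have hin := hineq x hxL
    have : 0 ≤ -(c * f x) - deriv (deriv f) x := by linarith
    exact mul_nonneg hsinn this
  have hsb : s * b = Real.pi := by
    rw [hb]; field_simp
  have h0 : W 0 = f 0 * s := by simp [hW]
  have hbv : W b = -(f b * s) := by
    simp [hW, hsb, Real.cos_pi, Real.sin_pi]
  have hle := hmono (Set.left_mem_Icc.mpr hb0.le) (Set.right_mem_Icc.mpr hb0.le) hb0.le
  have hf0 := hpos 0 ⟨le_rfl, hL.le⟩
  have hfb := hpos b ⟨hb0.le, hbL.le⟩
  rw [h0, hbv] at hle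
  nlinarith
end

section
/- Let L > 0 and κ > 0, and let ψ : ℝ³ → ℝ be a C² function that is positive everywhere, 1-periodic in its second and third variables, and satisfies −8·(∂²_t ψ + ∂²_y ψ + ∂²_z ψ) ≥ κ·ψ at every point whose first coordinate lies in [0, L]. Then κ ≤ 8π²/L². -/
open MeasureTheory Real Set

noncomputable section

namespace SCBaux

def ρm : Measure ℝ := volume.restrict (Set.Icc (0:ℝ) 1)

def μ2 : Measure (ℝ × ℝ) := ρm.prod ρm

instance : SFinite ρm := by unfold ρm; infer_instance

def S2 : Set (ℝ × ℝ) := Set.Icc (0:ℝ) 1 ×ˢ Set.Icc (0:ℝ) 1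

lemma μ2_eq : μ2 = volume.restrict S2 := by
  rw [μ2, ρm, Measure.prod_restrict, ← Measure.volume_eq_prod, S2]

lemma isCompact_S2 : IsCompact S2 := isCompact_Icc.prod isCompact_Icc

lemma measurableSet_S2 : MeasurableSet S2 := measurableSet_Icc.prod measurableSet_Icc

lemma integrable_of_continuous {f : ℝ × ℝ → ℝ} (hf : Continuous f) : Integrable f μ2 := by
  rw [μ2_eq]
  exact hf.continuousOn.integrableOn_compact isCompact_S2

lemma hasDerivAt_int {f g : ℝ × (ℝ × ℝ) → ℝ} (hf : Continuous f) (hg : Continuous g)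
    (hd : ∀ (t : ℝ) (q : ℝ × ℝ), HasDerivAt (fun s => f (s, q)) (g (t, q)) t) (t : ℝ) :
    HasDerivAt (fun s => ∫ q, f (s, q) ∂μ2) (∫ q, g (t, q) ∂μ2) t := by
  obtain ⟨C, hC⟩ := ((isCompact_Icc (a := t - 1) (b := t + 1)).prod isCompact_S2).exists_bound_of_continuousOn
    hg.continuousOn
  have hmeas : ∀ x : ℝ, AEStronglyMeasurable (fun q : ℝ × ℝ => f (x, q)) μ2 :=
    fun x => ((hf.comp (continuous_const.prodMk continuous_id)).aestronglyMeasurable)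
  have h := hasDerivAt_integral_of_dominated_loc_of_deriv_le (μ := μ2) (x₀ := t) (s := Metric.ball t 1)
    (F := fun s q => f (s, q)) (F' := fun s q => g (s, q)) (bound := fun _ => |C|)
    (Metric.ball_mem_nhds t one_pos)
    (Filter.Eventually.of_forall hmeas)
    (integrable_of_continuous (hf.comp (continuous_const.prodMk continuous_id)))
    ((hg.comp (continuous_const.prodMk continuous_id)).aestronglyMeasurable)
    ?_
    (integrable_of_continuous continuous_const)
    (Filter.Eventually.of_forall fun q x _ => hd x q)
  · exact h.2
  · rw [μ2_eq]
    filter_upwards [ae_restrict_mem measurableSet_S2] with q hq x hx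
    have hx' : x ∈ Set.Icc (t - 1) (t + 1) := by
      rw [Real.ball_eq_Ioo] at hx
      exact ⟨hx.1.le, hx.2.le⟩
    exact (hC (x, q) ⟨hx', hq⟩).trans (le_abs_self C)

lemma fderiv_periodic {f : ℝ × ℝ × ℝ → ℝ} (hf : Differentiable ℝ f) (v : ℝ × ℝ × ℝ)
    (hp : ∀ p, f (p + v) = f p) (p : ℝ × ℝ × ℝ) : fderiv ℝ f (p + v) = fderiv ℝ f p := by
  have h1 : HasFDerivAt (fun q => f (q + v))
      ((fderiv ℝ f (p + v)).comp (ContinuousLinearMap.id ℝ (ℝ × ℝ × ℝ))) p :=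
    (hf (p + v)).hasFDerivAt.comp p ((hasFDerivAt_id p).add_const v)
  have h2 : HasFDerivAt f (fderiv ℝ f (p + v)) p := by
    have heq : (fun q => f (q + v)) = f := funext hp
    rw [heq, ContinuousLinearMap.comp_id] at h1
    exact h1
  exact (h2.fderiv).symm ▸ rfl

/-- Sturm comparison. -/
lemma sturm {F F' F'' : ℝ → ℝ} {m : ℝ} (hm : 0 < m)
    (hF : ∀ t, HasDerivAt F (F' t) t) (hF' : ∀ t, HasDerivAt F' (F'' t) t)
    (h0 : 0 < F 0) (hT : 0 < F (π / m))
    (hie : ∀ t ∈ Set.Icc 0 (π / m), F'' t ≤ -m ^ 2 * F t) : False := by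
  have hT0 : 0 < π / m := div_pos Real.pi_pos hm
  have hmT : m * (π / m) = π := mul_div_cancel₀ π hm.ne'
  have hd : ∀ t, HasDerivAt (fun t => F' t * Real.sin (m * t) - m * F t * Real.cos (m * t))
      ((F'' t + m ^ 2 * F t) * Real.sin (m * t)) t := by
    intro t
    have hmt : HasDerivAt (fun t : ℝ => m * t) m t := by
      simpa using (hasDerivAt_id t).const_mul m
    have h1 := (hF' t).mul hmt.sin
    have h2 := ((hF t).const_mul m).mul hmt.cos
    refine (h1.sub h2).congr_deriv ?_
    ring
  have hanti : AntitoneOn (fun t => F' t * Real.sin (m * t) - m * F t * Real.cos (m * t))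
      (Set.Icc 0 (π / m)) := by
    apply antitoneOn_of_deriv_nonpos (convex_Icc 0 (π / m))
    · exact fun x _ => (hd x).differentiableAt.continuousAt.continuousWithinAt
    · exact fun x _ => ((hd x).differentiableAt).differentiableWithinAt
    · intro x hx
      rw [interior_Icc] at hx
      rw [(hd x).deriv]
      apply mul_nonpos_of_nonpos_of_nonneg
      · have := hie x ⟨hx.1.le, hx.2.le⟩
        linarith
      · apply Real.sin_nonneg_of_nonneg_of_le_pi
        · exact mul_nonneg hm.le hx.1.le
        · calc m * x ≤ m * (π / m) := by
                exact mul_le_mul_of_nonneg_left hx.2.le hm.le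
            _ = π := hmT
  have hmono := hanti (Set.left_mem_Icc.2 hT0.le) (Set.right_mem_Icc.2 hT0.le) hT0.le
  simp only [mul_zero, Real.sin_zero, Real.cos_zero, hmT, Real.sin_pi, Real.cos_pi] at hmono
  nlinarith [mul_pos hm h0, mul_pos hm hT]

end SCBaux

open SCBaux

theorem scalar_curvature_bound_on_flat_cylinder (L κ : ℝ) (hL : 0 < L) (hκ : 0 < κ)
    (ψ : ℝ × ℝ × ℝ → ℝ) (hψ : ContDiff ℝ 2 ψ) (hpos : ∀ p, 0 < ψ p)
    (hper : ∀ t y z : ℝ, ψ (t, y + 1, z) = ψ (t, y, z) ∧ ψ (t, y, z + 1) = ψ (t, y, z))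
    (hineq : ∀ t ∈ Set.Icc (0 : ℝ) L, ∀ y z : ℝ,
      κ * ψ (t, y, z) ≤
        -8 * (deriv (deriv fun s => ψ (s, y, z)) t +
              deriv (deriv fun s => ψ (t, s, z)) y +
              deriv (deriv fun s => ψ (t, y, s)) z)) :
    κ ≤ 8 * Real.pi ^ 2 / L ^ 2 := by
  by_contra hcon
  push_neg at hcon
  have hψd : Differentiable ℝ ψ := hψ.differentiable (by norm_num)
  have hψ1 : ContDiff ℝ 1 (fderiv ℝ ψ) := hψ.fderiv_right (by norm_num)
  -- the directional derivative functions
  set v1 : ℝ × ℝ × ℝ := (1, 0, 0) with hv1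
  set v2 : ℝ × ℝ × ℝ := (0, 1, 0) with hv2
  set v3 : ℝ × ℝ × ℝ := (0, 0, 1) with hv3
  set A1 : ℝ × ℝ × ℝ → ℝ := fun p => fderiv ℝ ψ p v1 with hA1def
  set A2 : ℝ × ℝ × ℝ → ℝ := fun p => fderiv ℝ ψ p v2 with hA2def
  set A3 : ℝ × ℝ × ℝ → ℝ := fun p => fderiv ℝ ψ p v3 with hA3def
  have hA1 : ContDiff ℝ 1 A1 := (ContinuousLinearMap.apply ℝ ℝ v1).contDiff.comp hψ1
  have hA2 : ContDiff ℝ 1 A2 := (ContinuousLinearMap.apply ℝ ℝ v2).contDiff.comp hψ1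
  have hA3 : ContDiff ℝ 1 A3 := (ContinuousLinearMap.apply ℝ ℝ v3).contDiff.comp hψ1
  set B1 : ℝ × ℝ × ℝ → ℝ := fun p => fderiv ℝ A1 p v1 with hB1def
  set B2 : ℝ × ℝ × ℝ → ℝ := fun p => fderiv ℝ A2 p v2 with hB2def
  set B3 : ℝ × ℝ × ℝ → ℝ := fun p => fderiv ℝ A3 p v3 with hB3def
  have hB1c : Continuous B1 :=
    (ContinuousLinearMap.apply ℝ ℝ v1).continuous.comp (hA1.continuous_fderiv one_ne_zero)
  have hB2c : Continuous B2 :=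
    (ContinuousLinearMap.apply ℝ ℝ v2).continuous.comp (hA2.continuous_fderiv one_ne_zero)
  have hB3c : Continuous B3 :=
    (ContinuousLinearMap.apply ℝ ℝ v3).continuous.comp (hA3.continuous_fderiv one_ne_zero)
  -- first directional derivatives
  have hdt : ∀ (f : ℝ × ℝ × ℝ → ℝ), Differentiable ℝ f → ∀ t y z : ℝ,
      HasDerivAt (fun s => f (s, y, z)) (fderiv ℝ f (t, y, z) v1) t := by
    intro f hf t y z
    have hline : HasDerivAt (fun s : ℝ => ((s, y, z) : ℝ × ℝ × ℝ)) v1 t := by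
      have := (hasDerivAt_id t).prodMk (hasDerivAt_const t ((y, z) : ℝ × ℝ))
      simpa [hv1, Prod.mk_zero_zero] using this
    exact (hf (t, y, z)).hasFDerivAt.comp_hasDerivAt t hline
  have hdy : ∀ (f : ℝ × ℝ × ℝ → ℝ), Differentiable ℝ f → ∀ t y z : ℝ,
      HasDerivAt (fun s => f (t, s, z)) (fderiv ℝ f (t, y, z) v2) y := by
    intro f hf t y z
    have hline : HasDerivAt (fun s : ℝ => ((t, s, z) : ℝ × ℝ × ℝ)) v2 y := by
      have := (hasDerivAt_const y t).prodMk ((hasDerivAt_id y).prodMk (hasDerivAt_const y z))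
      simpa [hv2] using this
    exact (hf (t, y, z)).hasFDerivAt.comp_hasDerivAt y hline
  have hdz : ∀ (f : ℝ × ℝ × ℝ → ℝ), Differentiable ℝ f → ∀ t y z : ℝ,
      HasDerivAt (fun s => f (t, y, s)) (fderiv ℝ f (t, y, z) v3) z := by
    intro f hf t y z
    have hline : HasDerivAt (fun s : ℝ => ((t, y, s) : ℝ × ℝ × ℝ)) v3 z := by
      have := (hasDerivAt_const z t).prodMk ((hasDerivAt_const z y).prodMk (hasDerivAt_id z))
      simpa [hv3] using this
    exact (hf (t, y, z)).hasFDerivAt.comp_hasDerivAt z hline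
  have hA1d : Differentiable ℝ A1 := hA1.differentiable one_ne_zero
  have hA2d : Differentiable ℝ A2 := hA2.differentiable one_ne_zero
  have hA3d : Differentiable ℝ A3 := hA3.differentiable one_ne_zero
  -- identify the iterated derivatives from the statement
  have hkey : ∀ t ∈ Set.Icc (0 : ℝ) L, ∀ y z : ℝ,
      B1 (t, y, z) + B2 (t, y, z) + B3 (t, y, z) ≤ -(κ / 8) * ψ (t, y, z) := by
    intro t ht y z
    have e1 : deriv (deriv fun s => ψ (s, y, z)) t = B1 (t, y, z) := by
      have : (deriv fun s => ψ (s, y, z)) = fun s => A1 (s, y, z) :=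
        funext fun s => (hdt ψ hψd s y z).deriv
      rw [this]
      exact (hdt A1 hA1d t y z).deriv
    have e2 : deriv (deriv fun s => ψ (t, s, z)) y = B2 (t, y, z) := by
      have : (deriv fun s => ψ (t, s, z)) = fun s => A2 (t, s, z) :=
        funext fun s => (hdy ψ hψd t s z).deriv
      rw [this]
      exact (hdy A2 hA2d t y z).deriv
    have e3 : deriv (deriv fun s => ψ (t, y, s)) z = B3 (t, y, z) := by
      have : (deriv fun s => ψ (t, y, s)) = fun s => A3 (t, y, s) :=
        funext fun s => (hdz ψ hψd t y s).deriv
      rw [this]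
      exact (hdz A3 hA3d t y z).deriv
    have h := hineq t ht y z
    rw [e1, e2, e3] at h
    linarith
  -- periodicity of A2 and A3
  have hper2 : ∀ p : ℝ × ℝ × ℝ, ψ (p + v2) = ψ p := by
    rintro ⟨t, y, z⟩
    simpa [hv2, Prod.mk_add_mk] using (hper t y z).1
  have hper3 : ∀ p : ℝ × ℝ × ℝ, ψ (p + v3) = ψ p := by
    rintro ⟨t, y, z⟩
    simpa [hv3, Prod.mk_add_mk] using (hper t y z).2
  have hA2per : ∀ t z : ℝ, A2 (t, 1, z) = A2 (t, 0, z) := by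
    intro t z
    have := fderiv_periodic hψd v2 hper2 (t, 0, z)
    have heq : ((t, 0, z) : ℝ × ℝ × ℝ) + v2 = (t, 1, z) := by
      simp [hv2, Prod.mk_add_mk]
    rw [heq] at this
    simp only [hA2def]
    rw [this]
  have hA3per : ∀ t y : ℝ, A3 (t, y, 1) = A3 (t, y, 0) := by
    intro t y
    have := fderiv_periodic hψd v3 hper3 (t, y, 0)
    have heq : ((t, y, 0) : ℝ × ℝ × ℝ) + v3 = (t, y, 1) := by
      simp [hv3, Prod.mk_add_mk]
    rw [heq] at this
    simp only [hA3def]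
    rw [this]
  -- vanishing of the torus-direction integrals
  have hIcc : ∀ (g : ℝ → ℝ), Continuous g → (∀ x, HasDerivAt g (deriv g x) x) → True := fun _ _ _ => trivial
  have hvan2 : ∀ t : ℝ, ∫ q, B2 (t, q) ∂μ2 = 0 := by
    intro t
    have hint : Integrable (fun q : ℝ × ℝ => B2 (t, q)) μ2 :=
      integrable_of_continuous (hB2c.comp (continuous_const.prodMk continuous_id))
    rw [μ2] at hint ⊢
    rw [integral_prod_symm _ hint]
    have inner : ∀ z : ℝ, (∫ y, B2 (t, y, z) ∂ρm) = 0 := by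
      intro z
      have hcont : Continuous fun y : ℝ => B2 (t, y, z) := by
        exact hB2c.comp (by fun_prop)
      have : (∫ y, B2 (t, y, z) ∂ρm) = ∫ y in (0:ℝ)..1, B2 (t, y, z) := by
        rw [ρm, intervalIntegral.integral_of_le zero_le_one,
          ← MeasureTheory.integral_Icc_eq_integral_Ioc]
      rw [this, intervalIntegral.integral_eq_sub_of_hasDerivAt
        (fun y _ => hdy A2 hA2d t y z) (hcont.intervalIntegrable 0 1)]
      rw [show A2 (t, 1, z) = A2 (t, 0, z) from hA2per t z]
      ring
    simp only [inner]
    simp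
  have hvan3 : ∀ t : ℝ, ∫ q, B3 (t, q) ∂μ2 = 0 := by
    intro t
    have hint : Integrable (fun q : ℝ × ℝ => B3 (t, q)) μ2 :=
      integrable_of_continuous (hB3c.comp (continuous_const.prodMk continuous_id))
    rw [μ2] at hint ⊢
    rw [integral_prod _ hint]
    have inner : ∀ y : ℝ, (∫ z, B3 (t, y, z) ∂ρm) = 0 := by
      intro y
      have hcont : Continuous fun z : ℝ => B3 (t, y, z) := by
        exact hB3c.comp (by fun_prop)
      have : (∫ z, B3 (t, y, z) ∂ρm) = ∫ z in (0:ℝ)..1, B3 (t, y, z) := by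
        rw [ρm, intervalIntegral.integral_of_le zero_le_one,
          ← MeasureTheory.integral_Icc_eq_integral_Ioc]
      rw [this, intervalIntegral.integral_eq_sub_of_hasDerivAt
        (fun z _ => hdz A3 hA3d t y z) (hcont.intervalIntegrable 0 1)]
      rw [show A3 (t, y, 1) = A3 (t, y, 0) from hA3per t y]
      ring
    simp only [inner]
    simp
  -- the averaged function and its derivatives
  set G : ℝ → ℝ := fun t => ∫ q, ψ (t, q) ∂μ2 with hGdef
  set G' : ℝ → ℝ := fun t => ∫ q, A1 (t, q) ∂μ2 with hG'def
  set G'' : ℝ → ℝ := fun t => ∫ q, B1 (t, q) ∂μ2 with hG''def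
  have hG : ∀ t, HasDerivAt G (G' t) t := by
    intro t
    exact hasDerivAt_int hψ.continuous hA1.continuous
      (fun s q => by simpa using hdt ψ hψd s q.1 q.2) t
  have hG' : ∀ t, HasDerivAt G' (G'' t) t := by
    intro t
    exact hasDerivAt_int hA1.continuous hB1c
      (fun s q => by simpa using hdt A1 hA1d s q.1 q.2) t
  -- positivity of G
  have hGpos : ∀ t, 0 < G t := by
    intro t
    obtain ⟨q0, hq0S, hq0⟩ := isCompact_S2.exists_isMinOn
      ⟨(0, 0), by constructor <;> simp [S2] <;> norm_num⟩
      ((hψ.continuous.comp ((continuous_const (y := t)).prodMk continuous_id)).continuousOn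
        (s := S2))
    have hc : 0 < ψ (t, q0) := hpos _
    have hμS2 : (volume S2).toReal = 1 := by
      rw [S2, Measure.volume_eq_prod, Measure.prod_prod]
      simp [Real.volume_Icc]
    have hmono : (∫ q in S2, ψ (t, q0)) ≤ ∫ q in S2, ψ (t, q) := by
      apply setIntegral_mono_on
      · exact integrableOn_const isCompact_S2.measure_lt_top.ne
      · exact (hψ.continuous.comp
          (continuous_const.prodMk continuous_id)).continuousOn.integrableOn_compact
          isCompact_S2
      · exact measurableSet_S2
      · exact fun x hx => hq0 hx
    have hconst : (∫ _ in S2, ψ (t, q0)) = ψ (t, q0) := by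
      rw [setIntegral_const, measureReal_def, hμS2, one_smul]
    have : G t = ∫ q in S2, ψ (t, q) := by rw [hGdef, μ2_eq]
    rw [this]
    calc (0:ℝ) < ψ (t, q0) := hc
      _ = ∫ _ in S2, ψ (t, q0) := hconst.symm
      _ ≤ ∫ q in S2, ψ (t, q) := hmono
  -- the differential inequality for G
  have hGineq : ∀ t ∈ Set.Icc (0 : ℝ) L, G'' t ≤ -(κ / 8) * G t := by
    intro t ht
    have hintB1 : Integrable (fun q : ℝ × ℝ => B1 (t, q)) μ2 :=
      integrable_of_continuous (hB1c.comp (continuous_const.prodMk continuous_id))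
    have hintB2 : Integrable (fun q : ℝ × ℝ => B2 (t, q)) μ2 :=
      integrable_of_continuous (hB2c.comp (continuous_const.prodMk continuous_id))
    have hintB3 : Integrable (fun q : ℝ × ℝ => B3 (t, q)) μ2 :=
      integrable_of_continuous (hB3c.comp (continuous_const.prodMk continuous_id))
    have hintψ : Integrable (fun q : ℝ × ℝ => -(κ / 8) * ψ (t, q)) μ2 :=
      (integrable_of_continuous
        (hψ.continuous.comp (continuous_const.prodMk continuous_id))).const_mul _
    have e1 : (∫ q, (B1 (t, q) + B2 (t, q) + B3 (t, q)) ∂μ2)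
        = (∫ q, (B1 (t, q) + B2 (t, q)) ∂μ2) + ∫ q, B3 (t, q) ∂μ2 :=
      integral_add (hintB1.add hintB2) hintB3
    have e2 : (∫ q, (B1 (t, q) + B2 (t, q)) ∂μ2)
        = (∫ q, B1 (t, q) ∂μ2) + ∫ q, B2 (t, q) ∂μ2 :=
      integral_add hintB1 hintB2
    have hsum : G'' t = ∫ q, (B1 (t, q) + B2 (t, q) + B3 (t, q)) ∂μ2 := by
      rw [e1, e2, hvan2 t, hvan3 t, hG''def]
      ring
    rw [hsum]
    have hle : ∀ q : ℝ × ℝ, B1 (t, q) + B2 (t, q) + B3 (t, q) ≤ -(κ / 8) * ψ (t, q) :=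
      fun q => hkey t ht q.1 q.2
    calc (∫ q, (B1 (t, q) + B2 (t, q) + B3 (t, q)) ∂μ2)
        ≤ ∫ q, -(κ / 8) * ψ (t, q) ∂μ2 :=
          integral_mono ((hintB1.add hintB2).add hintB3) hintψ hle
      _ = -(κ / 8) * G t := by rw [hGdef, integral_const_mul]
  -- set up the Sturm comparison
  set m : ℝ := Real.sqrt (κ / 8) with hmdef
  have hm : 0 < m := Real.sqrt_pos.2 (by positivity)
  have hm2 : m ^ 2 = κ / 8 := Real.sq_sqrt (by positivity)
  have hTL : π / m < L := by
    rw [div_lt_iff₀ hm]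
    have hπL : π / L < m := by
      have h8 : 8 * π ^ 2 / L ^ 2 * L ^ 2 = 8 * π ^ 2 := by field_simp
      have hmul := mul_lt_mul_of_pos_right hcon (show (0:ℝ) < L ^ 2 by positivity)
      rw [h8] at hmul
      have h1 : (π / L) ^ 2 < m ^ 2 := by
        rw [hm2, div_pow]
        rw [div_lt_div_iff₀ (by positivity) (by norm_num : (0:ℝ) < 8)]
        linarith
      exact lt_of_pow_lt_pow_left₀ 2 hm.le h1
    calc π = (π / L) * L := by field_simp
      _ < m * L := mul_lt_mul_of_pos_right hπL hL
      _ = L * m := mul_comm _ _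
  have hsub : Set.Icc (0:ℝ) (π / m) ⊆ Set.Icc (0:ℝ) L :=
    Set.Icc_subset_Icc le_rfl hTL.le
  exact sturm hm hG hG' (hGpos 0) (hGpos (π / m))
    (fun t ht => by
      have := hGineq t (hsub ht)
      rw [hm2]
      linarith)
end
end

section
/- Let a > 0 and K > 0, and let f : ℝ → ℂ be a map whose restriction to [0, a] is K-Lipschitz and whose image f([0, a]) is the entire unit circle {z ∈ ℂ : |z| = 1}. Then K·a ≥ 2π. -/
open Real Complex Finset

lemma helper1 (x : ℝ) (hx : |x| ≤ π) :
    ‖Complex.exp (x * Complex.I) - 1‖ = 2 * Real.sin (|x| / 2) := by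
  have h0 : 0 ≤ 2 * Real.sin (|x| / 2) := by
    have : 0 ≤ Real.sin (|x| / 2) :=
      Real.sin_nonneg_of_nonneg_of_le_pi (by positivity) (by linarith [Real.pi_pos])
    linarith
  have hsq : ‖Complex.exp (x * Complex.I) - 1‖ ^ 2
      = (2 * Real.sin (|x| / 2)) ^ 2 := by
    rw [Complex.sq_norm, Complex.normSq_apply]
    have hre : (Complex.exp (x * Complex.I) - 1).re = Real.cos x - 1 := by
      simp [Complex.exp_ofReal_mul_I_re]
    have him : (Complex.exp (x * Complex.I) - 1).im = Real.sin x := by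
      simp [Complex.exp_ofReal_mul_I_im]
    rw [hre, him]
    have h1 := Real.sin_sq_add_cos_sq x
    have h2 := Real.cos_two_mul (|x| / 2)
    rw [(by ring : 2 * (|x| / 2) = |x|), Real.cos_abs] at h2
    have h3 := Real.sin_sq_add_cos_sq (|x| / 2)
    nlinarith
  rw [← Real.sqrt_sq (norm_nonneg _), hsq, Real.sqrt_sq h0]

lemma helper2 {z : ℂ} {r : ℝ} (hz : ‖z‖ = 1)
    (hr : ‖z - 1‖ ≤ r) : |Complex.arg z| ≤ π / 2 * r := by
  have hπ := Real.pi_pos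
  have harg : |Complex.arg z| ≤ π := Complex.abs_arg_le_pi z
  have hz1 : z = Complex.exp (Complex.arg z * Complex.I) := by
    conv_lhs => rw [← Complex.norm_mul_exp_arg_mul_I z]
    rw [hz]; simp
  have hchord : ‖z - 1‖ = 2 * Real.sin (|Complex.arg z| / 2) := by
    conv_lhs => rw [hz1]
    exact helper1 _ harg
  have hsin := Real.mul_le_sin (x := |Complex.arg z| / 2) (by positivity) (by linarith)
  have h2 : |Complex.arg z| / π ≤ Real.sin (|Complex.arg z| / 2) := by
    have : 2 / π * (|Complex.arg z| / 2) = |Complex.arg z| / π := by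
      field_simp
    linarith [this ▸ hsin]
  have h3 : |Complex.arg z| ≤ Real.sin (|Complex.arg z| / 2) * π := (div_le_iff₀ hπ).mp h2
  have h4 : Real.sin (|Complex.arg z| / 2) ≤ r / 2 := by rw [hchord] at hr; linarith
  nlinarith

lemma helper3 {x : ℝ} (hx : |x| ≤ 1) : |x| - |x| ^ 3 / 16 ≤ 2 * Real.sin (|x| / 2) := by
  rcases eq_or_ne x 0 with h | h
  · simp [h]
  · have h1 : 0 < |x| := abs_pos.mpr h
    have := Real.sin_gt_sub_cube (x := |x| / 2) (by positivity)
    nlinarith [pow_pos h1 3]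

set_option maxHeartbeats 1000000 in
theorem lipschitz_surjection_onto_circle_length_bound (a : ℝ) (K : NNReal)
    (ha : 0 < a) (hK : 0 < K) (f : ℝ → ℂ)
    (hf : LipschitzOnWith K f (Set.Icc (0 : ℝ) a))
    (himg : f '' Set.Icc (0 : ℝ) a = {z : ℂ | ‖z‖ = 1}) :
    2 * Real.pi ≤ (K : ℝ) * a := by
  have hπ := Real.pi_pos
  set k : ℝ := (K : ℝ) with hkdef
  have hk0 : 0 < k := hK
  have hcirc : ∀ s ∈ Set.Icc (0 : ℝ) a, ‖f s‖ = 1 := by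
    intro s hs
    have : f s ∈ {z : ℂ | ‖z‖ = 1} := himg ▸ Set.mem_image_of_mem f hs
    exact this
  by_contra hcon
  push_neg at hcon
  set ε : ℝ := 2 * π - k * a with hεdef
  have hε0 : 0 < ε := by simp only [hεdef]; linarith
  set b : ℝ := min 1 (ε / 3) with hbdef
  have hb0 : 0 < b := lt_min one_pos (by linarith)
  obtain ⟨n, hn⟩ := exists_nat_gt (π * k * a / (2 * b))
  have hn0 : 0 < n := by
    rcases Nat.eq_zero_or_pos n with h | h
    · exfalso; rw [h] at hn; simp at hn
      have : 0 < π * k * a / (2 * b) := by positivity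
      linarith
    · exact h
  have hnR : (0 : ℝ) < n := by exact_mod_cast hn0
  set h : ℝ := a / n with hhdef
  have hh0 : 0 < h := by positivity
  set c : ℝ := π * k * h / 2 with hcdef
  have hc0 : 0 < c := by positivity
  have hcb : c < b := by
    have h1 : π * k * a < (n : ℝ) * (2 * b) := by
      have := (div_lt_iff₀ (by positivity : (0:ℝ) < 2 * b)).mp hn
      linarith
    rw [hcdef, hhdef, div_lt_iff₀ (by norm_num : (0:ℝ) < 2)]
    have h2 : π * k * (a / (n : ℝ)) = π * k * a / (n : ℝ) := by ring
    rw [h2, div_lt_iff₀ hnR]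
    nlinarith
  have hc1 : c ≤ 1 := le_trans hcb.le (min_le_left _ _)
  have hc3 : 3 * c < ε := by
    have := le_trans hcb.le (min_le_right _ _)
    linarith [hcb.trans_le (min_le_right _ _)]
  -- partition points
  set t : ℕ → ℝ := fun i => i * h with htdef
  have htmem : ∀ i ≤ n, t i ∈ Set.Icc (0 : ℝ) a := by
    intro i hi
    constructor
    · positivity
    · have : (i : ℝ) ≤ n := by exact_mod_cast hi
      calc (i : ℝ) * h ≤ n * h := by nlinarith
        _ = a := by rw [hhdef]; field_simp
  have hta : t n = a := by
    show (n : ℝ) * h = a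
    rw [hhdef]; field_simp
  -- Lipschitz distance bound
  have hdist : ∀ u v : ℝ, u ∈ Set.Icc (0 : ℝ) a → v ∈ Set.Icc (0 : ℝ) a → |u - v| ≤ h →
      ‖f u - f v‖ ≤ k * h := by
    intro u v hu hv huv
    have := hf.dist_le_mul u hu v hv
    rw [Complex.dist_eq, Real.dist_eq] at this
    calc ‖f u - f v‖ ≤ k * |u - v| := this
      _ ≤ k * h := by nlinarith
  -- key step lemma
  have key2 : ∀ u v : ℝ, u ∈ Set.Icc (0 : ℝ) a → v ∈ Set.Icc (0 : ℝ) a → |u - v| ≤ h →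
      |Complex.arg (f u / f v)| ≤ c ∧
      f u = f v * Complex.exp (Complex.arg (f u / f v) * Complex.I) := by
    intro u v hu hv huv
    have hfu : ‖f u‖ = 1 := hcirc u hu
    have hfv : ‖f v‖ = 1 := hcirc v hv
    have hfv0 : f v ≠ 0 := by
      intro h0; rw [h0] at hfv; simp at hfv
    have habsw : ‖f u / f v‖ = 1 := by
      rw [norm_div, hfu, hfv]; norm_num
    have hchord : ‖f u / f v - 1‖ ≤ k * h := by
      have : f u / f v - 1 = (f u - f v) / f v := by field_simp
      rw [this, norm_div, hfv, div_one]
      exact hdist u v hu hv huv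
    have harg := helper2 habsw hchord
    constructor
    · calc |Complex.arg (f u / f v)| ≤ π / 2 * (k * h) := harg
        _ = c := by rw [hcdef]; ring
    · have hw : (f u / f v : ℂ) = Complex.exp (Complex.arg (f u / f v) * Complex.I) := by
        conv_lhs => rw [← Complex.norm_mul_exp_arg_mul_I (f u / f v)]
        rw [habsw]; simp
      field_simp at hw
      exact hw
  -- increments
  set Δ : ℕ → ℝ := fun i => Complex.arg (f (t (i + 1)) / f (t i)) with hΔdef
  set θ : ℕ → ℝ := fun i => ∑ j ∈ Finset.range i, Δ j with hθdef
  have hstep : ∀ i < n, |t (i + 1) - t i| ≤ h ∧ t i ∈ Set.Icc (0:ℝ) a ∧ t (i+1) ∈ Set.Icc (0:ℝ) a := by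
    intro i hi
    refine ⟨?_, htmem i hi.le, htmem (i+1) hi⟩
    have : t (i + 1) - t i = h := by simp only [htdef]; push_cast; ring
    rw [this, abs_of_pos hh0]
  have hΔc : ∀ i < n, |Δ i| ≤ c := fun i hi =>
    (key2 _ _ (hstep i hi).2.2 (hstep i hi).2.1 (hstep i hi).1).1
  have hΔexp : ∀ i < n, f (t (i + 1)) = f (t i) * Complex.exp (Δ i * Complex.I) := fun i hi =>
    (key2 _ _ (hstep i hi).2.2 (hstep i hi).2.1 (hstep i hi).1).2
  have hθexp : ∀ i ≤ n, f (t i) = f 0 * Complex.exp ((θ i : ℝ) * Complex.I) := by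
    intro i hi
    induction i with
    | zero => simp [hθdef, htdef]
    | succ i ih =>
      have hi' : i < n := hi
      rw [hΔexp i hi', ih hi'.le]
      have : θ (i + 1) = θ i + Δ i := by
        simp only [hθdef]; rw [Finset.sum_range_succ]
      rw [this, mul_assoc, ← Complex.exp_add]
      push_cast
      ring
  -- sum bound
  set S : ℝ := ∑ j ∈ Finset.range n, |Δ j| with hSdef
  have hS0 : 0 ≤ S := Finset.sum_nonneg fun j _ => abs_nonneg _
  have hSbound : (1 - c ^ 2 / 16) * S ≤ k * a := by
    have hterm : ∀ i ∈ Finset.range n, (1 - c ^ 2 / 16) * |Δ i| ≤ k * h := by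
      intro i hi
      rw [Finset.mem_range] at hi
      have h1 : |Δ i| ≤ c := hΔc i hi
      have h2 : |Δ i| ≤ 1 := h1.trans hc1
      have h3 := helper3 h2
      have h4 : |Δ i| ≤ π := Complex.abs_arg_le_pi _
      have hchord : ‖f (t (i + 1)) - f (t i)‖ = 2 * Real.sin (|Δ i| / 2) := by
        rw [hΔexp i hi]
        have : f (t i) * Complex.exp (Δ i * Complex.I) - f (t i)
            = f (t i) * (Complex.exp (Δ i * Complex.I) - 1) := by ring
        rw [this, norm_mul, hcirc (t i) (htmem i hi.le), one_mul]
        exact helper1 _ h4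
      have h5 : 2 * Real.sin (|Δ i| / 2) ≤ k * h := by
        rw [← hchord]
        exact hdist _ _ (hstep i hi).2.2 (hstep i hi).2.1 (hstep i hi).1
      have h6 : |Δ i| ^ 3 ≤ |Δ i| * c ^ 2 := by
        nlinarith [abs_nonneg (Δ i), mul_le_mul_of_nonneg_left
          (mul_self_le_mul_self (abs_nonneg (Δ i)) h1) (abs_nonneg (Δ i))]
      nlinarith [abs_nonneg (Δ i)]
    calc (1 - c ^ 2 / 16) * S = ∑ i ∈ Finset.range n, (1 - c ^ 2 / 16) * |Δ i| := by
          rw [hSdef, Finset.mul_sum]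
      _ ≤ ∑ i ∈ Finset.range n, k * h := Finset.sum_le_sum hterm
      _ = n * (k * h) := by rw [Finset.sum_const, Finset.card_range]; ring
      _ = k * a := by rw [hhdef]; field_simp
  -- θ difference bound
  have habsθ : ∀ p q, p ≤ n → q ≤ n → |θ p - θ q| ≤ S := by
    have haux : ∀ q p, q ≤ p → p ≤ n → |θ p - θ q| ≤ S := by
      intro q p hqp hpn
      have : θ p - θ q = ∑ j ∈ Finset.Ico q p, Δ j := by
        simp only [hθdef]
        rw [Finset.sum_Ico_eq_sub _ hqp]
      rw [this]
      calc |∑ j ∈ Finset.Ico q p, Δ j| ≤ ∑ j ∈ Finset.Ico q p, |Δ j| :=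
            Finset.abs_sum_le_sum_abs _ _
        _ ≤ S := by
            rw [hSdef]
            apply Finset.sum_le_sum_of_subset_of_nonneg
            · intro x hx
              rw [Finset.mem_Ico] at hx
              rw [Finset.mem_range]
              exact lt_of_lt_of_le hx.2 hpn
            · intro x _ _; exact abs_nonneg _
    intro p q hp hq
    rcases le_total q p with hqp | hpq
    · exact haux q p hqp hp
    · rw [abs_sub_comm]; exact haux p q hpq hq
  -- covering
  have hf00 : ‖f 0‖ = 1 := hcirc 0 ⟨le_refl _, ha.le⟩
  have hf0ne : f 0 ≠ 0 := by intro h0; rw [h0] at hf00; simp at hf00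
  have hcover : ∀ z : ℂ, ‖z‖ = 1 →
      ∃ i ≤ n, ∃ g : ℝ, |g| ≤ c ∧ z = f 0 * Complex.exp (((θ i + g : ℝ)) * Complex.I) := by
    intro z hz
    have : z ∈ f '' Set.Icc (0 : ℝ) a := by rw [himg]; exact hz
    obtain ⟨s, hs, hfs⟩ := this
    obtain ⟨u, hu0, hun, hsu⟩ : ∃ u : ℝ, 0 ≤ u ∧ u ≤ (n : ℝ) ∧ s = u * h := by
      refine ⟨s / h, div_nonneg hs.1 hh0.le, ?_, by field_simp⟩
      rw [div_le_iff₀ hh0]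
      have hnh : (n : ℝ) * h = a := by rw [hhdef]; field_simp
      rw [hnh]; exact hs.2
    obtain ⟨i, hin, hiu, hui⟩ : ∃ i : ℕ, i < n ∧ (i : ℝ) ≤ u ∧ u ≤ (i : ℝ) + 1 := by
      refine ⟨min (Nat.floor u) (n - 1),
        lt_of_le_of_lt (min_le_right _ _) (Nat.sub_lt hn0 one_pos), ?_, ?_⟩
      · calc ((min (Nat.floor u) (n - 1) : ℕ) : ℝ) ≤ (Nat.floor u : ℝ) := by
              exact_mod_cast min_le_left _ _
          _ ≤ u := Nat.floor_le hu0
      · rcases le_or_gt (Nat.floor u) (n - 1) with hle | hgt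
        · rw [min_eq_left hle]
          exact (Nat.lt_floor_add_one u).le
        · have hnn : n ≤ Nat.floor u := by omega
          have hnf : (n : ℝ) ≤ Nat.floor u := by exact_mod_cast hnn
          have hun' : u = n := le_antisymm hun (le_trans hnf (Nat.floor_le hu0))
          rw [min_eq_right hgt.le, hun']
          have hcast : ((n - 1 : ℕ) : ℝ) = (n : ℝ) - 1 := by
            rw [Nat.cast_sub hn0]; norm_num
          rw [hcast]; linarith
    have hti : t i ≤ s := by
      rw [hsu]
      show (i : ℝ) * h ≤ u * h
      exact mul_le_mul_of_nonneg_right hiu hh0.le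
    have hti1 : s ≤ t (i + 1) := by
      rw [hsu]
      show u * h ≤ ((i + 1 : ℕ) : ℝ) * h
      push_cast
      exact mul_le_mul_of_nonneg_right hui hh0.le
    have hsdist : |s - t i| ≤ h := by
      rw [_root_.abs_of_nonneg (by linarith : (0:ℝ) ≤ s - t i)]
      have : t (i + 1) - t i = h := by simp only [htdef]; push_cast; ring
      linarith
    obtain ⟨hg, hexp⟩ := key2 s (t i) hs (htmem i hin.le) hsdist
    set g := Complex.arg (f s / f (t i)) with hgdef
    refine ⟨i, hin.le, g, hg, ?_⟩
    rw [← hfs, hexp, hθexp i hin.le, mul_assoc, ← Complex.exp_add]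
    congr 1
    push_cast
    ring
  -- max and min
  obtain ⟨p, hpmem, hpmax⟩ := Finset.exists_max_image (Finset.range (n + 1)) θ ⟨0, by simp⟩
  obtain ⟨q, hqmem, hqmin⟩ := Finset.exists_min_image (Finset.range (n + 1)) θ ⟨0, by simp⟩
  rw [Finset.mem_range, Nat.lt_succ_iff] at hpmem hqmem
  -- key claim
  have hMm : 2 * π - 2 * c ≤ θ p - θ q := by
    by_contra hlt
    push_neg at hlt
    set ψ : ℝ := (θ p + θ q) / 2 + π with hψdef
    have hz0 : ‖f 0 * Complex.exp ((ψ : ℝ) * Complex.I)‖ = 1 := by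
      rw [norm_mul, hf00, Complex.norm_exp_ofReal_mul_I, one_mul]
    obtain ⟨i, hi, g, hgc, hgeq⟩ := hcover _ hz0
    have heq : Complex.exp ((ψ : ℝ) * Complex.I)
        = Complex.exp (((θ i + g : ℝ)) * Complex.I) := mul_left_cancel₀ hf0ne hgeq
    obtain ⟨m, hm⟩ := Complex.exp_eq_exp_iff_exists_int.mp heq
    have hmre : ψ = θ i + g + m * (2 * π) := by
      have := congrArg Complex.im hm
      simpa using this
    have hθi : θ q ≤ θ i ∧ θ i ≤ θ p :=
      ⟨hqmin i (Finset.mem_range.mpr (Nat.lt_succ_of_le hi)),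
       hpmax i (Finset.mem_range.mpr (Nat.lt_succ_of_le hi))⟩
    have hlo : c < ψ - θ i := by
      simp only [hψdef]
      have := hθi.2
      linarith
    have hhi : ψ - θ i < 2 * π - c := by
      simp only [hψdef]
      have := hθi.1
      linarith
    have hg1 : g = ψ - θ i - m * (2 * π) := by linarith
    rcases le_or_gt (m : ℝ) 0 with hm0 | hm1
    · have : c < g := by nlinarith
      have := (abs_le.mp hgc).2
      linarith
    · have hm1' : (1 : ℝ) ≤ m := by
        have : (0 : ℤ) < m := by exact_mod_cast hm1
        exact_mod_cast this
      have : g < -c := by nlinarith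
      have := (abs_le.mp hgc).1
      linarith
  -- conclude
  have hfin : |θ p - θ q| ≤ S := habsθ p q hpmem hqmem
  have h1 : 2 * π - 2 * c ≤ S := le_trans hMm (le_trans (le_abs_self _) hfin)
  have h2 : (1 - c ^ 2 / 16) * (2 * π - 2 * c) ≤ (1 - c ^ 2 / 16) * S := by
    apply mul_le_mul_of_nonneg_left h1
    nlinarith
  have hπ4 := Real.pi_le_four
  have h3 : (1 - c ^ 2 / 16) * (2 * π - 2 * c) ≤ k * a := le_trans h2 hSbound
  have h4 : c ^ 2 ≤ c := by nlinarith
  have h5 : c ^ 2 * π ≤ 4 * c := by nlinarith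
  have h6 : 2 * π ≤ k * a + 3 * c := by nlinarith
  simp only [hεdef] at hc3
  linarith
end
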